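/- Let k be a field, V and V' vector spaces over k with an injective linear map V ↪ V', and A ↪ B an injective homomorphism of (not necessarily unital) k-algebras. Then the induced algebra homomorphism T̄̃(A ⊕ V) → T̄̃(B ⊕ V') is injective, where T̄̃(A ⊕ V) denotes the quotient of the reduced tensor algebra T̄(A ⊕ V) = ⊕_{n≥1} (A ⊕ V)^{⊗n} by the two-sided ideal generated by the elements a ⊗ b − a·b for a, b ∈ A. -/

import Mathlib

set_option linter.unusedSectionVars false
set_option maxHeartbeats 1000000
open TensorProduct


/- The non-unital algebra T̄̃(A ⊕ V): the reduced tensor algebra (free non-unital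
associative algebra) on the k-module A ⊕ V modulo the relations a ⊗ b = a·b (a, b ∈ A),
realized as a quotient of the non-unital semigroup algebra of the free semigroup on the
set A × V by the ring congruence generated by the k-linearity relations on generators
together with the relations a ⊗ b = a·b; and injectivity of induced maps. -/

namespace Stmt6

variable (k : Type*) [Field k]
variable (A : Type*) [NonUnitalRing A] [Module k A] [SMulCommClass k A A] [IsScalarTower k A A]
variable (V : Type*) [AddCommGroup V] [Module k V]

/-- A generator `c · (a, v)` of the reduced tensor algebra. -/
noncomputable def gen (a : A) (v : V) (c : k) :
    MonoidAlgebra k (FreeSemigroup (A × V)) :=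
  MonoidAlgebra.single (FreeSemigroup.of ((a, v) : A × V)) c

/-- The defining relations of `T̄̃(A ⊕ V)`: `k`-linearity of the generators (making the
quotient the reduced tensor algebra on the module `A ⊕ V`) together with the relations
`a ⊗ b = a·b` for `a, b ∈ A`. -/
noncomputable def rel :
    MonoidAlgebra k (FreeSemigroup (A × V)) → MonoidAlgebra k (FreeSemigroup (A × V)) → Prop :=
  fun x y =>
    (∃ p q : A × V, x = gen k A V (p.1 + q.1) (p.2 + q.2) 1 ∧
        y = gen k A V p.1 p.2 1 + gen k A V q.1 q.2 1) ∨
    (∃ (c : k) (p : A × V), x = gen k A V (c • p.1) (c • p.2) 1 ∧ y = gen k A V p.1 p.2 c) ∨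
    (∃ a b : A, x = gen k A V a 0 1 * gen k A V b 0 1 ∧ y = gen k A V (a * b) 0 1)

/-- The ring congruence generated by the defining relations. -/
noncomputable def con : RingCon (MonoidAlgebra k (FreeSemigroup (A × V))) :=
  ringConGen (rel k A V)

/-- The non-unital algebra `T̄̃(A ⊕ V)`. -/
abbrev TBarTilde := (con k A V).Quotient

/-- The class of a generator in `T̄̃(A ⊕ V)`. -/
noncomputable def mkGen (a : A) (v : V) (c : k) : TBarTilde k A V :=
  ((gen k A V a v c : MonoidAlgebra k (FreeSemigroup (A × V))) : (con k A V).Quotient)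

noncomputable def aug : TensorAlgebra k (A × V) →ₐ[k] k := TensorAlgebra.lift k 0

@[simp] lemma aug_ι (m : A × V) : aug k A V (TensorAlgebra.ι k m) = 0 := by
  simp [aug]

abbrev Dx := TensorAlgebra k (A × V) × ((A × V) ⊗[k] TensorAlgebra k (A × V))

noncomputable instance : Mul (Dx k A V) :=
  ⟨fun p q => (p.1 * q.1,
    aug k A V p.1 • q.2 + LinearMap.lTensor (A × V) (LinearMap.mulRight k q.1) p.2)⟩

lemma Dx_mul_def (p q : Dx k A V) : p * q = (p.1 * q.1,
    aug k A V p.1 • q.2 + LinearMap.lTensor (A × V) (LinearMap.mulRight k q.1) p.2) := rfl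

noncomputable instance : One (Dx k A V) := ⟨(1, 0)⟩

lemma Dx_one_def : (1 : Dx k A V) = (1, 0) := rfl

lemma lT_add (y z : TensorAlgebra k (A × V)) (s : (A × V) ⊗[k] TensorAlgebra k (A × V)) :
    LinearMap.lTensor (A × V) (LinearMap.mulRight k (y + z)) s
      = LinearMap.lTensor (A × V) (LinearMap.mulRight k y) s
        + LinearMap.lTensor (A × V) (LinearMap.mulRight k z) s := by
  induction s using TensorProduct.induction_on with
  | zero => simp
  | tmul m u => simp [mul_add, tmul_add]
  | add s t hs ht => rw [map_add, map_add, map_add, hs, ht]; abel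

lemma lT_smul (c : k) (y : TensorAlgebra k (A × V)) (s : (A × V) ⊗[k] TensorAlgebra k (A × V)) :
    LinearMap.lTensor (A × V) (LinearMap.mulRight k (c • y)) s
      = c • LinearMap.lTensor (A × V) (LinearMap.mulRight k y) s := by
  induction s using TensorProduct.induction_on with
  | zero => simp
  | tmul m u => simp [mul_smul_comm, tmul_smul]
  | add s t hs ht => rw [map_add, map_add, hs, ht, smul_add]

lemma lT_mul (y z : TensorAlgebra k (A × V)) (s : (A × V) ⊗[k] TensorAlgebra k (A × V)) :
    LinearMap.lTensor (A × V) (LinearMap.mulRight k (y * z)) s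
      = LinearMap.lTensor (A × V) (LinearMap.mulRight k z)
          (LinearMap.lTensor (A × V) (LinearMap.mulRight k y) s) := by
  induction s using TensorProduct.induction_on with
  | zero => simp
  | tmul m u => simp [mul_assoc]
  | add s t hs ht => rw [map_add, map_add, map_add, hs, ht]

noncomputable instance : Ring (Dx k A V) :=
  { (inferInstance : AddCommGroup (Dx k A V)) with
    mul := (· * ·)
    one := 1
    mul_assoc := by
      rintro ⟨x, s⟩ ⟨y, t⟩ ⟨z, u⟩
      refine Prod.ext (mul_assoc x y z) ?_
      simp only [Dx_mul_def, map_mul, map_add, map_smul, mul_smul, smul_add, lT_mul]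
      abel
    one_mul := by
      rintro ⟨x, s⟩
      refine Prod.ext (one_mul x) ?_
      simp [Dx_mul_def, Dx_one_def]
    mul_one := by
      rintro ⟨x, s⟩
      refine Prod.ext (mul_one x) ?_
      simp [Dx_mul_def, Dx_one_def]
    left_distrib := by
      rintro ⟨x, s⟩ ⟨y, t⟩ ⟨z, u⟩
      refine Prod.ext (mul_add x y z) ?_
      simp only [Dx_mul_def, Prod.fst_add, Prod.snd_add, smul_add, lT_add]
      abel
    right_distrib := by
      rintro ⟨x, s⟩ ⟨y, t⟩ ⟨z, u⟩
      refine Prod.ext (add_mul x y z) ?_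
      simp only [Dx_mul_def, Prod.fst_add, Prod.snd_add, map_add, add_smul, lT_add]
      abel
    zero_mul := by
      rintro ⟨x, s⟩
      refine Prod.ext (zero_mul x) ?_
      simp [Dx_mul_def]
    mul_zero := by
      rintro ⟨x, s⟩
      refine Prod.ext (mul_zero x) ?_
      simp [Dx_mul_def] }

noncomputable instance : Algebra k (Dx k A V) :=
  Algebra.ofModule
    (by
      rintro c ⟨x, s⟩ ⟨y, t⟩
      refine Prod.ext (smul_mul_assoc c x y) ?_
      simp [Dx_mul_def, smul_mul_assoc, map_smul, smul_smul, lT_smul, smul_add])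
    (by
      rintro c ⟨x, s⟩ ⟨y, t⟩
      refine Prod.ext (mul_smul_comm c x y) ?_
      simp [Dx_mul_def, mul_smul_comm, lT_smul, smul_add, smul_smul, mul_comm])



lemma Dx_algebraMap (c : k) :
    algebraMap k (Dx k A V) c = (algebraMap k (TensorAlgebra k (A × V)) c, 0) := by
  rw [Algebra.algebraMap_eq_smul_one, Dx_one_def, Prod.smul_mk,
    ← Algebra.algebraMap_eq_smul_one, smul_zero]

/-- first component projection as an algebra hom -/
noncomputable def fstA : Dx k A V →ₐ[k] TensorAlgebra k (A × V) where
  toFun := Prod.fst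
  map_one' := rfl
  map_mul' _ _ := rfl
  map_zero' := rfl
  map_add' _ _ := rfl
  commutes' c := by rw [Dx_algebraMap]

noncomputable def dlGen : (A × V) →ₗ[k] Dx k A V :=
  LinearMap.prod (TensorAlgebra.ι k) ((TensorProduct.mk k (A × V) (TensorAlgebra k (A × V))).flip 1)

noncomputable def Dl : TensorAlgebra k (A × V) →ₐ[k] Dx k A V :=
  TensorAlgebra.lift k (dlGen k A V)

lemma fstA_Dl : (fstA k A V).comp (Dl k A V) = AlgHom.id k _ := by
  apply TensorAlgebra.hom_ext
  ext m
  all_goals simp [Dl, fstA, dlGen]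

lemma Dl_fst (x : TensorAlgebra k (A × V)) : (Dl k A V x).1 = x :=
  congrArg (fun f => f x) (congrArg (DFunLike.coe) (fstA_Dl k A V))

noncomputable def dL : TensorAlgebra k (A × V) →ₗ[k] ((A × V) ⊗[k] TensorAlgebra k (A × V)) :=
  (LinearMap.snd k _ _) ∘ₗ (Dl k A V).toLinearMap

@[simp] lemma dL_ι (m : A × V) : dL k A V (TensorAlgebra.ι k m) = m ⊗ₜ[k] 1 := by
  simp [dL, Dl, dlGen]

@[simp] lemma dL_one : dL k A V 1 = 0 := by
  simp [dL, Dx_one_def]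

@[simp] lemma dL_algebraMap (c : k) : dL k A V (algebraMap k _ c) = 0 := by
  simp [dL, Dx_algebraMap]

lemma dL_mul (x y : TensorAlgebra k (A × V)) :
    dL k A V (x * y) = aug k A V x • dL k A V y
      + LinearMap.lTensor (A × V) (LinearMap.mulRight k y) (dL k A V x) := by
  have h := map_mul (Dl k A V) x y
  have h2 := congrArg Prod.snd h
  simp only [Dx_mul_def, Dl_fst] at h2
  simpa [dL, aug] using h2

lemma dL_ι_mul (m : A × V) (y : TensorAlgebra k (A × V)) :
    dL k A V (TensorAlgebra.ι k m * y) = m ⊗ₜ[k] y := by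
  rw [dL_mul]; simp



noncomputable def kap : (A × V) →ₗ[k] (A × V) →ₗ[k] TensorAlgebra k (A × V) :=
  LinearMap.mk₂ k
    (fun p q => TensorAlgebra.ι k ((p.1 * q.1, 0) : A × V)
      - TensorAlgebra.ι k ((p.1, 0) : A × V) * TensorAlgebra.ι k ((q.1, 0) : A × V))
    (fun p p' q => by
      have h1 : (((p + p').1 * q.1, (0:V)) : A × V)
          = ((p.1 * q.1, (0:V)) : A × V) + ((p'.1 * q.1, (0:V)) : A × V) := by
        simp [Prod.ext_iff, add_mul]
      have h2 : (((p + p').1, (0:V)) : A × V) = ((p.1, (0:V)) : A × V) + ((p'.1, (0:V)) : A × V) := by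
        simp [Prod.ext_iff]
      rw [h1, h2, map_add, map_add, add_mul]
      abel)
    (fun c p q => by
      have h1 : (((c • p).1 * q.1, (0:V)) : A × V) = c • ((p.1 * q.1, (0:V)) : A × V) := by
        simp [Prod.ext_iff, smul_mul_assoc]
      have h2 : (((c • p).1, (0:V)) : A × V) = c • ((p.1, (0:V)) : A × V) := by
        simp [Prod.ext_iff]
      rw [h1, h2, map_smul, map_smul, smul_mul_assoc, smul_sub])
    (fun p q q' => by
      have h1 : ((p.1 * (q + q').1, (0:V)) : A × V)
          = ((p.1 * q.1, (0:V)) : A × V) + ((p.1 * q'.1, (0:V)) : A × V) := by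
        simp [Prod.ext_iff, mul_add]
      have h2 : (((q + q').1, (0:V)) : A × V) = ((q.1, (0:V)) : A × V) + ((q'.1, (0:V)) : A × V) := by
        simp [Prod.ext_iff]
      rw [h1, h2, map_add, map_add, mul_add]
      abel)
    (fun c p q => by
      have h1 : ((p.1 * (c • q).1, (0:V)) : A × V) = c • ((p.1 * q.1, (0:V)) : A × V) := by
        simp [Prod.ext_iff, mul_smul_comm]
      have h2 : (((c • q).1, (0:V)) : A × V) = c • ((q.1, (0:V)) : A × V) := by
        simp [Prod.ext_iff]
      rw [h1, h2, map_smul, map_smul, mul_smul_comm, smul_sub])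

lemma kap_apply (p q : A × V) :
    kap k A V p q = TensorAlgebra.ι k ((p.1 * q.1, 0) : A × V)
      - TensorAlgebra.ι k ((p.1, 0) : A × V) * TensorAlgebra.ι k ((q.1, 0) : A × V) := rfl

noncomputable def cf (p : A × V) :
    ((A × V) ⊗[k] TensorAlgebra k (A × V)) →ₗ[k] TensorAlgebra k (A × V) :=
  TensorProduct.lift ((LinearMap.mul k (TensorAlgebra k (A × V))).comp (kap k A V p))

@[simp] lemma cf_tmul (p q : A × V) (t : TensorAlgebra k (A × V)) :
    cf k A V p (q ⊗ₜ[k] t) = kap k A V p q * t := by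
  simp [cf]

lemma cf_add (p p' : A × V) (s : (A × V) ⊗[k] TensorAlgebra k (A × V)) :
    cf k A V (p + p') s = cf k A V p s + cf k A V p' s := by
  induction s using TensorProduct.induction_on with
  | zero => simp
  | tmul q u => simp [map_add, add_mul]
  | add s t hs ht => rw [map_add, map_add, map_add, hs, ht]; abel

lemma cf_smul (c : k) (p : A × V) (s : (A × V) ⊗[k] TensorAlgebra k (A × V)) :
    cf k A V (c • p) s = c • cf k A V p s := by
  induction s using TensorProduct.induction_on with
  | zero => simp
  | tmul q u => simp [map_smul, smul_mul_assoc]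
  | add s t hs ht => rw [map_add, map_add, hs, ht, smul_add]

lemma cf_rT (p : A × V) (y : TensorAlgebra k (A × V))
    (s : (A × V) ⊗[k] TensorAlgebra k (A × V)) :
    cf k A V p (LinearMap.lTensor (A × V) (LinearMap.mulRight k y) s) = cf k A V p s * y := by
  induction s using TensorProduct.induction_on with
  | zero => simp
  | tmul q u => simp [mul_assoc]
  | add s t hs ht => simp only [map_add, hs, ht, add_mul]

noncomputable def ell : (A × V) →ₗ[k] Module.End k (TensorAlgebra k (A × V)) where
  toFun p := LinearMap.mulLeft k (TensorAlgebra.ι k p) + (cf k A V p) ∘ₗ dL k A V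
  map_add' p q := by
    ext t
    simp only [LinearMap.add_apply, LinearMap.coe_comp, Function.comp_apply,
      LinearMap.mulLeft_apply, map_add, add_mul, cf_add]
    abel
  map_smul' c p := by
    ext t
    simp [smul_mul_assoc, cf_smul]

lemma ell_apply (p : A × V) (t : TensorAlgebra k (A × V)) :
    ell k A V p t = TensorAlgebra.ι k p * t + cf k A V p (dL k A V t) := rfl

noncomputable def L : TensorAlgebra k (A × V) →ₐ[k] Module.End k (TensorAlgebra k (A × V)) :=
  TensorAlgebra.lift k (ell k A V)

@[simp] lemma L_iota (p : A × V) : L k A V (TensorAlgebra.ι k p) = ell k A V p := by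
  simp [L]

lemma ell_one (p : A × V) : ell k A V p 1 = TensorAlgebra.ι k p := by
  simp [ell_apply]

lemma ell_algebraMap (p : A × V) (c : k) :
    ell k A V p (algebraMap k _ c) = c • TensorAlgebra.ι k p := by
  rw [ell_apply, dL_algebraMap, map_zero, add_zero, ← Algebra.commutes, ← Algebra.smul_def]

lemma ell_iota_mul (p q : A × V) (t : TensorAlgebra k (A × V)) :
    ell k A V p (TensorAlgebra.ι k q * t)
      = TensorAlgebra.ι k p * (TensorAlgebra.ι k q * t) + kap k A V p q * t := by
  rw [ell_apply, dL_ι_mul, cf_tmul]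

lemma ell_iota (p q : A × V) :
    ell k A V p (TensorAlgebra.ι k q)
      = TensorAlgebra.ι k p * TensorAlgebra.ι k q + kap k A V p q := by
  rw [ell_apply, dL_ι, cf_tmul, mul_one]

lemma ell_merge (a b : A) (t : TensorAlgebra k (A × V)) :
    ell k A V ((a, 0) : A × V) (TensorAlgebra.ι k ((b, 0) : A × V) * t)
      = TensorAlgebra.ι k ((a * b, 0) : A × V) * t := by
  rw [ell_iota_mul, kap_apply, sub_mul, mul_assoc]
  abel

lemma ell_cf (a b : A) (s : (A × V) ⊗[k] TensorAlgebra k (A × V)) :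
    ell k A V ((a, 0) : A × V) (cf k A V ((b, 0) : A × V) s)
      = cf k A V ((a * b, 0) : A × V) s := by
  induction s using TensorProduct.induction_on with
  | zero => simp
  | tmul q u =>
      rw [cf_tmul, cf_tmul, kap_apply, kap_apply, sub_mul, sub_mul, map_sub, mul_assoc,
        ell_merge, ell_merge, mul_assoc, mul_assoc]
  | add s t hs ht => rw [map_add, map_add, map_add, hs, ht]

lemma ell_comp (a b : A) :
    ell k A V ((a * b, 0) : A × V) = ell k A V ((a, 0) : A × V) * ell k A V ((b, 0) : A × V) := by
  ext t
  rw [Module.End.mul_apply]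
  conv_rhs => rw [ell_apply k A V ((b,0) : A × V) t]
  rw [map_add, ell_merge, ell_cf, ell_apply]

lemma L_kap (p q : A × V) : L k A V (kap k A V p q) = 0 := by
  rw [kap_apply, map_sub, map_mul, L_iota, L_iota, L_iota, ell_comp, sub_self]

lemma ell_mul (p : A × V) (x y : TensorAlgebra k (A × V)) :
    ell k A V p (x * y)
      = ell k A V p x * y + aug k A V x • (ell k A V p y - TensorAlgebra.ι k p * y) := by
  rw [ell_apply, dL_mul, map_add, map_smul, cf_rT]
  conv_rhs => rw [ell_apply, ell_apply, add_sub_cancel_left, add_mul]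
  rw [mul_assoc]
  abel



lemma L_algebraMap (c : k) :
    L k A V (algebraMap k _ c) = c • (1 : Module.End k (TensorAlgebra k (A × V))) := by
  rw [AlgHom.commutes, Algebra.algebraMap_eq_smul_one]

lemma L_ell (p : A × V) (t : TensorAlgebra k (A × V)) :
    L k A V (ell k A V p t) = ell k A V p * L k A V t := by
  induction t using TensorAlgebra.induction with
  | algebraMap c =>
      rw [ell_algebraMap, map_smul, L_iota, L_algebraMap, mul_smul_comm, mul_one]
  | ι q => rw [ell_iota, map_add, map_mul, L_iota, L_iota, L_kap, add_zero]
  | mul x y hx hy =>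
      rw [ell_mul, map_add, map_mul, map_smul, map_sub, map_mul, hx, hy, L_iota, map_mul,
        sub_self, smul_zero, add_zero, mul_assoc]
  | add x y hx hy => rw [map_add, map_add, map_add, hx, hy, mul_add]

lemma L_L (x : TensorAlgebra k (A × V)) :
    ∀ y, L k A V (L k A V x y) = L k A V x * L k A V y := by
  induction x using TensorAlgebra.induction with
  | algebraMap c =>
      intro y
      rw [L_algebraMap]
      simp only [LinearMap.smul_apply, Module.End.one_apply, map_smul]
      rw [smul_mul_assoc, one_mul]
  | ι p => intro y; rw [L_iota]; exact L_ell k A V p y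
  | mul x₁ x₂ h1 h2 =>
      intro y
      rw [map_mul, Module.End.mul_apply, h1, h2, mul_assoc]
  | add x₁ x₂ h1 h2 =>
      intro y
      rw [map_add, LinearMap.add_apply, map_add, h1, h2, add_mul]

noncomputable def lw : FreeSemigroup (A × V) →ₙ* Module.End k (TensorAlgebra k (A × V)) :=
  FreeSemigroup.lift (fun p => ell k A V p)

@[simp] lemma lw_of (p : A × V) : lw k A V (FreeSemigroup.of p) = ell k A V p := by
  simp [lw]

noncomputable def nfw (w : FreeSemigroup (A × V)) : TensorAlgebra k (A × V) :=
  lw k A V w 1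

@[simp] lemma nfw_of (p : A × V) : nfw k A V (FreeSemigroup.of p) = TensorAlgebra.ι k p := by
  rw [nfw, lw_of, ell_one]

lemma L_lw (w : FreeSemigroup (A × V)) :
    ∀ t, L k A V (lw k A V w t) = lw k A V w * L k A V t := by
  induction w using FreeSemigroup.recOnMul with
  | ih1 p => intro t; rw [lw_of]; exact L_ell k A V p t
  | ih2 w₁ w₂ h1 h2 =>
      intro t
      rw [map_mul, Module.End.mul_apply, h1, h2, mul_assoc]

lemma L_nfw (w : FreeSemigroup (A × V)) : L k A V (nfw k A V w) = lw k A V w := by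
  rw [nfw, L_lw, map_one, mul_one]

noncomputable def NF : MonoidAlgebra k (FreeSemigroup (A × V)) →ₗ[k] TensorAlgebra k (A × V) :=
  Finsupp.linearCombination k (nfw k A V) ∘ₗ (MonoidAlgebra.coeffLinearEquiv k).toLinearMap

lemma NF_single (w : FreeSemigroup (A × V)) (c : k) :
    NF k A V (MonoidAlgebra.single w c) = c • nfw k A V w :=
  Finsupp.linearCombination_single k c w

lemma nfw_mul (w₁ w₂ : FreeSemigroup (A × V)) :
    nfw k A V (w₁ * w₂) = L k A V (nfw k A V w₁) (nfw k A V w₂) := by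
  rw [L_nfw]
  simp only [nfw]
  rw [map_mul, Module.End.mul_apply]

lemma NF_mul (x y : MonoidAlgebra k (FreeSemigroup (A × V))) :
    NF k A V (x * y) = L k A V (NF k A V x) (NF k A V y) := by
  induction x using MonoidAlgebra.induction_linear with
  | zero => rw [zero_mul]; simp
  | add x₁ x₂ h1 h2 => simp only [add_mul, map_add, h1, h2, LinearMap.add_apply]
  | single w c =>
      induction y using MonoidAlgebra.induction_linear with
      | zero => rw [mul_zero]; simp
      | add y₁ y₂ h1 h2 => rw [mul_add, map_add, h1, h2, map_add, map_add]
      | single w' d =>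
          simp only [MonoidAlgebra.single_mul_single, NF_single, nfw_mul, map_smul,
            LinearMap.smul_apply, smul_smul, mul_comm c d]

noncomputable def nfCon : RingCon (MonoidAlgebra k (FreeSemigroup (A × V))) :=
{ r := fun x y => NF k A V x = NF k A V y
  iseqv := ⟨fun _ => rfl, Eq.symm, Eq.trans⟩
  mul' := fun {_ _ _ _} h h' => by
    show NF k A V _ = NF k A V _
    rw [NF_mul, NF_mul]
    exact congrArg₂ (fun u v => L k A V u v) h h'
  add' := fun {_ _ _ _} h h' => by
    show NF k A V _ = NF k A V _
    rw [map_add, map_add]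
    exact congrArg₂ (· + ·) h h' }

lemma nfCon_iff (x y : MonoidAlgebra k (FreeSemigroup (A × V))) :
    nfCon k A V x y ↔ NF k A V x = NF k A V y := Iff.rfl



----------------------------------------------------------------

lemma con_of {x y : MonoidAlgebra k (FreeSemigroup (A × V))} (h : rel k A V x y) :
    con k A V x y :=
  RingConGen.Rel.of _ _ h

lemma con_gen_add (p q : A × V) :
    con k A V (gen k A V (p.1 + q.1) (p.2 + q.2) 1)
      (gen k A V p.1 p.2 1 + gen k A V q.1 q.2 1) :=
  con_of k A V (Or.inl ⟨p, q, rfl, rfl⟩)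

lemma con_gen_smul (c : k) (p : A × V) :
    con k A V (gen k A V (c • p.1) (c • p.2) 1) (gen k A V p.1 p.2 c) :=
  con_of k A V (Or.inr (Or.inl ⟨c, p, rfl, rfl⟩))

lemma con_gen_mul (a b : A) :
    con k A V (gen k A V a 0 1 * gen k A V b 0 1) (gen k A V (a * b) 0 1) :=
  con_of k A V (Or.inr (Or.inr ⟨a, b, rfl, rfl⟩))

lemma smul_gen (c : k) (a : A) (v : V) (d : k) :
    c • gen k A V a v d = gen k A V a v (c * d) :=
  MonoidAlgebra.smul_single' c _ d

lemma con_le_nfCon : con k A V ≤ nfCon k A V := by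
  apply RingCon.ringConGen_le.mpr
  rintro x y (⟨p, q, rfl, rfl⟩ | ⟨c, p, rfl, rfl⟩ | ⟨a, b, rfl, rfl⟩) <;>
    show NF k A V _ = NF k A V _
  · have : ((p.1 + q.1, p.2 + q.2) : A × V) = p + q := rfl
    rw [map_add]
    simp only [gen, NF_single, nfw_of, one_smul, this, map_add]
  · have : ((c • p.1, c • p.2) : A × V) = c • p := rfl
    simp only [gen, NF_single, nfw_of, one_smul, this, map_smul]
  · rw [NF_mul]
    simp only [gen, NF_single, nfw_of, one_smul]
    rw [L_iota, ell_iota, kap_apply]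
    dsimp only
    abel

lemma rel_smul_con {x y : MonoidAlgebra k (FreeSemigroup (A × V))} (h : rel k A V x y)
    (c : k) : con k A V (c • x) (c • y) := by
  rcases h with ⟨p, q, rfl, rfl⟩ | ⟨d, p, rfl, rfl⟩ | ⟨a, b, rfl, rfl⟩
  · rw [smul_add, smul_gen, smul_gen, smul_gen, mul_one]
    refine ((con k A V).symm (con_gen_smul k A V c (p.1 + q.1, p.2 + q.2))).trans ?_
    have e1 : c • (p.1 + q.1) = (c • p).1 + (c • q).1 := by simp
    have e2 : c • (p.2 + q.2) = (c • p).2 + (c • q).2 := by simp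
    rw [e1, e2]
    refine (con_gen_add k A V (c • p) (c • q)).trans ?_
    have g1 := con_gen_smul k A V c p
    have g2 := con_gen_smul k A V c q
    exact (con k A V).add g1 g2
  · rw [smul_gen, smul_gen, mul_one]
    refine ((con k A V).symm (con_gen_smul k A V c (d • p.1, d • p.2))).trans ?_
    have e1 : c • (d • p.1) = (c * d) • p.1 := smul_smul c d p.1
    have e2 : c • (d • p.2) = (c * d) • p.2 := smul_smul c d p.2
    rw [e1, e2]
    exact con_gen_smul k A V (c * d) p
  · rw [smul_gen, mul_one, ← smul_mul_assoc, smul_gen]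
    have h0 : gen k A V a 0 (c * 1) = gen k A V a 0 c := by rw [mul_one]
    rw [h0]
    have g1 : con k A V (gen k A V a 0 c) (gen k A V (c • a) 0 1) := by
      have := (con k A V).symm (con_gen_smul k A V c ((a, 0) : A × V))
      simpa using this
    refine ((con k A V).mul g1 ((con k A V).refl _)).trans ?_
    refine (con_gen_mul k A V (c • a) b).trans ?_
    have e : (c • a) * b = c • (a * b) := smul_mul_assoc c a b
    rw [e]
    have h := con_gen_smul k A V c ((a * b, 0) : A × V)
    simp only [smul_zero] at h
    exact h

noncomputable def smulCon : RingCon (MonoidAlgebra k (FreeSemigroup (A × V))) :=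
{ r := fun x y => ∀ c : k, con k A V (c • x) (c • y)
  iseqv := ⟨fun _ _ => (con k A V).refl _, fun h c => (con k A V).symm (h c),
    fun h h' c => (con k A V).trans (h c) (h' c)⟩
  mul' := fun {a b a' b'} h h' c => by
    have h1 : con k A V ((c • a) * a') ((c • b) * a') :=
      (con k A V).mul (h c) ((con k A V).refl a')
    have h2 : con k A V ((c • b) * a') ((c • b) * b') :=
      (con k A V).mul ((con k A V).refl _) (by simpa using h' 1)
    have := h1.trans h2
    simp only [smul_mul_assoc] at this
    exact this
  add' := fun {a b a' b'} h h' c => by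
    simpa [smul_add] using (con k A V).add (h c) (h' c) }

lemma con_smul (c : k) {x y : MonoidAlgebra k (FreeSemigroup (A × V))}
    (h : con k A V x y) : con k A V (c • x) (c • y) := by
  have hle : con k A V ≤ smulCon k A V :=
    RingCon.ringConGen_le.mpr fun x y hr => fun c => rel_smul_con k A V hr c
  exact hle h c

noncomputable instance : SMul k (TBarTilde k A V) :=
  ⟨fun c => Quotient.map' (c • ·) fun _ _ h => con_smul k A V c h⟩

lemma quot_smul (c : k) (x : MonoidAlgebra k (FreeSemigroup (A × V))) :
    ((c • x : MonoidAlgebra k (FreeSemigroup (A × V))) : TBarTilde k A V)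
      = c • (x : TBarTilde k A V) := rfl

noncomputable instance : Module k (TBarTilde k A V) where
  one_smul q := Quotient.inductionOn' q fun x =>
    congrArg (fun z : MonoidAlgebra k (FreeSemigroup (A × V)) => (z : TBarTilde k A V))
      (one_smul k x)
  mul_smul c d q := Quotient.inductionOn' q fun x =>
    congrArg (fun z : MonoidAlgebra k (FreeSemigroup (A × V)) => (z : TBarTilde k A V))
      (mul_smul c d x)
  smul_zero c :=
    congrArg (fun z : MonoidAlgebra k (FreeSemigroup (A × V)) => (z : TBarTilde k A V))
      (smul_zero c)
  smul_add c q r := Quotient.inductionOn₂' q r fun x y =>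
    congrArg (fun z : MonoidAlgebra k (FreeSemigroup (A × V)) => (z : TBarTilde k A V))
      (smul_add c x y)
  add_smul c d q := Quotient.inductionOn' q fun x =>
    congrArg (fun z : MonoidAlgebra k (FreeSemigroup (A × V)) => (z : TBarTilde k A V))
      (add_smul c d x)
  zero_smul q := Quotient.inductionOn' q fun x =>
    congrArg (fun z : MonoidAlgebra k (FreeSemigroup (A × V)) => (z : TBarTilde k A V))
      (zero_smul k x)

noncomputable instance : IsScalarTower k (TBarTilde k A V) (TBarTilde k A V) :=
  ⟨fun c q r => Quotient.inductionOn₂' q r fun x y =>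
    congrArg (fun z : MonoidAlgebra k (FreeSemigroup (A × V)) => (z : TBarTilde k A V))
      (smul_mul_assoc c x y)⟩

noncomputable instance : SMulCommClass k (TBarTilde k A V) (TBarTilde k A V) :=
  ⟨fun c q r => Quotient.inductionOn₂' q r fun x y =>
    congrArg (fun z : MonoidAlgebra k (FreeSemigroup (A × V)) => (z : TBarTilde k A V))
      (mul_smul_comm c x y).symm⟩



noncomputable def genMap : (A × V) →ₗ[k] Unitization k (TBarTilde k A V) where
  toFun p := Unitization.inr ((gen k A V p.1 p.2 1 : MonoidAlgebra k (FreeSemigroup (A × V))) :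
    TBarTilde k A V)
  map_add' p q := by
    have h : ((gen k A V ((p + q).1) ((p + q).2) 1 : MonoidAlgebra k (FreeSemigroup (A × V))) :
        TBarTilde k A V)
        = ((gen k A V p.1 p.2 1 + gen k A V q.1 q.2 1 :
            MonoidAlgebra k (FreeSemigroup (A × V))) : TBarTilde k A V) :=
      (RingCon.eq _).mpr (con_gen_add k A V p q)
    rw [h, RingCon.coe_add, Unitization.inr_add]
  map_smul' c p := by
    have h : ((gen k A V ((c • p).1) ((c • p).2) 1 : MonoidAlgebra k (FreeSemigroup (A × V))) :
        TBarTilde k A V)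
        = ((gen k A V p.1 p.2 c : MonoidAlgebra k (FreeSemigroup (A × V))) : TBarTilde k A V) :=
      (RingCon.eq _).mpr (con_gen_smul k A V c p)
    rw [h, ← mul_one c, ← smul_gen, quot_smul, Unitization.inr_smul]
    simp

noncomputable def G : TensorAlgebra k (A × V) →ₐ[k] Unitization k (TBarTilde k A V) :=
  TensorAlgebra.lift k (genMap k A V)

@[simp] lemma G_iota (p : A × V) :
    G k A V (TensorAlgebra.ι k p)
      = Unitization.inr ((gen k A V p.1 p.2 1 : MonoidAlgebra k (FreeSemigroup (A × V))) :
          TBarTilde k A V) := by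
  simp [G, genMap]

lemma G_kap (p q : A × V) : G k A V (kap k A V p q) = 0 := by
  rw [kap_apply, map_sub, map_mul, G_iota, G_iota, G_iota]
  rw [← Unitization.inr_mul, ← RingCon.coe_mul]
  have h := (RingCon.eq _).mpr (con_gen_mul k A V p.1 q.1)
  rw [h]
  simp

lemma G_cf (p : A × V) (s : (A × V) ⊗[k] TensorAlgebra k (A × V)) :
    G k A V (cf k A V p s) = 0 := by
  induction s using TensorProduct.induction_on with
  | zero => simp
  | tmul q u => rw [cf_tmul, map_mul, G_kap, zero_mul]
  | add s t hs ht => rw [map_add, map_add, hs, ht, add_zero]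

lemma G_ell (p : A × V) (t : TensorAlgebra k (A × V)) :
    G k A V (ell k A V p t) = G k A V (TensorAlgebra.ι k p) * G k A V t := by
  rw [ell_apply, map_add, map_mul, G_cf, add_zero]

lemma G_lw (w : FreeSemigroup (A × V)) : ∀ t,
    G k A V (lw k A V w t)
      = Unitization.inr ((MonoidAlgebra.single w 1 : MonoidAlgebra k (FreeSemigroup (A × V))) :
          TBarTilde k A V) * G k A V t := by
  induction w using FreeSemigroup.recOnMul with
  | ih1 p => intro t; rw [lw_of, G_ell, G_iota]; rfl
  | ih2 w₁ w₂ h1 h2 =>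
      intro t
      rw [map_mul, Module.End.mul_apply, h1, h2, ← mul_assoc, ← Unitization.inr_mul,
        ← RingCon.coe_mul, MonoidAlgebra.single_mul_single, one_mul]

lemma G_nfw (w : FreeSemigroup (A × V)) :
    G k A V (nfw k A V w)
      = Unitization.inr ((MonoidAlgebra.single w 1 : MonoidAlgebra k (FreeSemigroup (A × V))) :
          TBarTilde k A V) := by
  rw [nfw, G_lw, map_one, mul_one]

lemma G_NF (x : MonoidAlgebra k (FreeSemigroup (A × V))) :
    G k A V (NF k A V x) = Unitization.inr ((x : TBarTilde k A V)) := by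
  induction x using MonoidAlgebra.induction_linear with
  | zero =>
      have h0' : ((0 : MonoidAlgebra k (FreeSemigroup (A × V))) : TBarTilde k A V) = 0 := rfl
      rw [map_zero, map_zero, h0', Unitization.inr_zero]
  | add x y hx hy =>
      have h2 : ((x + y : MonoidAlgebra k (FreeSemigroup (A × V))) : TBarTilde k A V)
          = (x : TBarTilde k A V) + (y : TBarTilde k A V) := rfl
      rw [map_add, map_add, hx, hy, h2, Unitization.inr_add]
  | single w c =>
      rw [NF_single, map_smul, G_nfw, ← Unitization.inr_smul, ← quot_smul]
      exact congrArg
        (fun z : MonoidAlgebra k (FreeSemigroup (A × V)) =>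
          Unitization.inr ((z : TBarTilde k A V)))
        (by rw [MonoidAlgebra.smul_single', mul_one])

lemma NF_faithful {x y : MonoidAlgebra k (FreeSemigroup (A × V))}
    (h : NF k A V x = NF k A V y) : (x : TBarTilde k A V) = (y : TBarTilde k A V) := by
  have := congrArg (G k A V) h
  rw [G_NF, G_NF] at this
  exact Unitization.inr_injective this



section Functorial

variable (B : Type*) [NonUnitalRing B] [Module k B] [SMulCommClass k B B] [IsScalarTower k B B]
variable (V' : Type*) [AddCommGroup V'] [Module k V']
variable (f : A →ₙₐ[k] B) (g : V →ₗ[k] V')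

noncomputable def phl : (A × V) →ₗ[k] (B × V') := ((f : A →ₗ[k] B)).prodMap g

@[simp] lemma phl_apply (p : A × V) : phl k A V B V' f g p = (f p.1, g p.2) := rfl

noncomputable def Psi : TensorAlgebra k (A × V) →ₐ[k] TensorAlgebra k (B × V') :=
  TensorAlgebra.lift k ((TensorAlgebra.ι k).comp (phl k A V B V' f g))

@[simp] lemma Psi_iota (p : A × V) :
    Psi k A V B V' f g (TensorAlgebra.ι k p) = TensorAlgebra.ι k (phl k A V B V' f g p) := by
  simp [Psi]

lemma aug_Psi (x : TensorAlgebra k (A × V)) :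
    aug k B V' (Psi k A V B V' f g x) = aug k A V x := by
  have h : (aug k B V').comp (Psi k A V B V' f g) = aug k A V := by
    apply TensorAlgebra.hom_ext
    ext m
    all_goals simp [aug]
  exact AlgHom.congr_fun h x

lemma lT_map (y : TensorAlgebra k (A × V)) (s : (A × V) ⊗[k] TensorAlgebra k (A × V)) :
    LinearMap.lTensor (B × V') (LinearMap.mulRight k (Psi k A V B V' f g y))
        (TensorProduct.map (phl k A V B V' f g) (Psi k A V B V' f g).toLinearMap s)
      = TensorProduct.map (phl k A V B V' f g) (Psi k A V B V' f g).toLinearMap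
          (LinearMap.lTensor (A × V) (LinearMap.mulRight k y) s) := by
  induction s using TensorProduct.induction_on with
  | zero => simp
  | tmul q u => simp [map_mul]
  | add s t hs ht => simp only [map_add, hs, ht]

lemma dL_Psi (t : TensorAlgebra k (A × V)) :
    dL k B V' (Psi k A V B V' f g t)
      = TensorProduct.map (phl k A V B V' f g) (Psi k A V B V' f g).toLinearMap
          (dL k A V t) := by
  induction t using TensorAlgebra.induction with
  | algebraMap c => rw [AlgHom.commutes, dL_algebraMap, dL_algebraMap, map_zero]
  | ι p => rw [Psi_iota, dL_ι, dL_ι, TensorProduct.map_tmul, AlgHom.toLinearMap_apply, map_one]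
  | mul x y hx hy =>
      rw [map_mul, dL_mul, dL_mul, map_add, map_smul, hx, hy, aug_Psi, lT_map]
  | add x y hx hy => rw [map_add, map_add, map_add, map_add, hx, hy]

lemma kap_Psi (p q : A × V) :
    Psi k A V B V' f g (kap k A V p q)
      = kap k B V' (phl k A V B V' f g p) (phl k A V B V' f g q) := by
  rw [kap_apply, map_sub, map_mul, Psi_iota, Psi_iota, Psi_iota, kap_apply]
  have h : phl k A V B V' f g ((p.1 * q.1, 0) : A × V)
      = (((phl k A V B V' f g p).1 * (phl k A V B V' f g q).1, 0) : B × V') := by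
    simp [Prod.ext_iff]
  have h1 : phl k A V B V' f g ((p.1, 0) : A × V)
      = (((phl k A V B V' f g p).1, 0) : B × V') := by simp [Prod.ext_iff]
  have h2 : phl k A V B V' f g ((q.1, 0) : A × V)
      = (((phl k A V B V' f g q).1, 0) : B × V') := by simp [Prod.ext_iff]
  rw [h, h1, h2]

lemma cf_Psi (p : A × V) (s : (A × V) ⊗[k] TensorAlgebra k (A × V)) :
    Psi k A V B V' f g (cf k A V p s)
      = cf k B V' (phl k A V B V' f g p)
          (TensorProduct.map (phl k A V B V' f g) (Psi k A V B V' f g).toLinearMap s) := by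
  induction s using TensorProduct.induction_on with
  | zero => simp
  | tmul q u => simp only [cf_tmul, map_mul, TensorProduct.map_tmul, kap_Psi]; rfl
  | add s t hs ht => simp only [map_add, hs, ht]

lemma ell_Psi (p : A × V) (t : TensorAlgebra k (A × V)) :
    Psi k A V B V' f g (ell k A V p t)
      = ell k B V' (phl k A V B V' f g p) (Psi k A V B V' f g t) := by
  rw [ell_apply, map_add, map_mul, Psi_iota, cf_Psi, ← dL_Psi, ell_apply]

noncomputable def wmap : FreeSemigroup (A × V) →ₙ* FreeSemigroup (B × V') :=
  FreeSemigroup.map fun p => (f p.1, g p.2)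

lemma lw_Psi (w : FreeSemigroup (A × V)) : ∀ t,
    Psi k A V B V' f g (lw k A V w t)
      = lw k B V' (wmap k A V B V' f g w) (Psi k A V B V' f g t) := by
  induction w using FreeSemigroup.recOnMul with
  | ih1 p =>
      intro t
      rw [lw_of, ell_Psi, wmap]
      rw [FreeSemigroup.map_of, lw_of]
      rfl
  | ih2 w₁ w₂ h1 h2 =>
      intro t
      rw [map_mul, Module.End.mul_apply, h1, h2, map_mul, map_mul, Module.End.mul_apply]

lemma nfw_Psi (w : FreeSemigroup (A × V)) :
    Psi k A V B V' f g (nfw k A V w) = nfw k B V' (wmap k A V B V' f g w) := by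
  rw [nfw, lw_Psi, map_one, nfw]

noncomputable def Phi (x : MonoidAlgebra k (FreeSemigroup (A × V))) :
    MonoidAlgebra k (FreeSemigroup (B × V')) :=
  MonoidAlgebra.mapDomain (wmap k A V B V' f g) x

lemma Phi_single (w : FreeSemigroup (A × V)) (c : k) :
    Phi k A V B V' f g (MonoidAlgebra.single w c)
      = MonoidAlgebra.single (wmap k A V B V' f g w) c :=
  MonoidAlgebra.mapDomain_single

lemma NF_Psi (x : MonoidAlgebra k (FreeSemigroup (A × V))) :
    Psi k A V B V' f g (NF k A V x) = NF k B V' (Phi k A V B V' f g x) := by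
  induction x using MonoidAlgebra.induction_linear with
  | zero => rw [map_zero, map_zero]; rw [Phi, MonoidAlgebra.mapDomain_zero, map_zero]
  | add x y hx hy =>
      have h2 : Phi k A V B V' f g (x + y) = Phi k A V B V' f g x + Phi k A V B V' f g y :=
        MonoidAlgebra.mapDomain_add _ _ _
      rw [map_add, map_add, hx, hy, h2, map_add]
  | single w c =>
      rw [NF_single, map_smul, nfw_Psi, Phi_single, NF_single]

lemma Psi_injective (hf : Function.Injective f) (hg : Function.Injective g) :
    Function.Injective (Psi k A V B V' f g) := by
  have hf' : LinearMap.ker (f : A →ₗ[k] B) = ⊥ := LinearMap.ker_eq_bot.mpr hf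
  have hg' : LinearMap.ker g = ⊥ := LinearMap.ker_eq_bot.mpr hg
  obtain ⟨r, hr⟩ := (f : A →ₗ[k] B).exists_leftInverse_of_injective hf'
  obtain ⟨s, hs⟩ := g.exists_leftInverse_of_injective hg'
  set Θ := TensorAlgebra.lift k ((TensorAlgebra.ι k).comp (r.prodMap s)) with hΘ
  have hcomp : Θ.comp (Psi k A V B V' f g) = AlgHom.id k _ := by
    apply TensorAlgebra.hom_ext
    ext m
    · have : r (f m) = m := LinearMap.congr_fun hr m
      simp [hΘ, Psi, this]
    · have : s (g m) = m := LinearMap.congr_fun hs m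
      simp [hΘ, Psi, this]
  intro x y h
  have := congrArg Θ h
  rwa [← AlgHom.comp_apply, ← AlgHom.comp_apply, hcomp, AlgHom.id_apply, AlgHom.id_apply]
    at this



variable {k A V B V'}

lemma F_single (F : TBarTilde k A V → TBarTilde k B V')
    (hmul : ∀ x y, F (x * y) = F x * F y)
    (hF : ∀ (a : A) (v : V) (c : k), F (mkGen k A V a v c) = mkGen k B V' (f a) (g v) c)
    (w : FreeSemigroup (A × V)) : ∀ c : k,
      F (((MonoidAlgebra.single w c : MonoidAlgebra k (FreeSemigroup (A × V))) :
          TBarTilde k A V))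
        = ((MonoidAlgebra.single (wmap k A V B V' f g w) c :
            MonoidAlgebra k (FreeSemigroup (B × V'))) : TBarTilde k B V') := by
  induction w using FreeSemigroup.recOnMul with
  | ih1 p =>
      intro c
      exact hF p.1 p.2 c
  | ih2 w₁ w₂ h1 h2 =>
      intro c
      have e : (MonoidAlgebra.single (FreeSemigroup.of w₁ * w₂) c :
            MonoidAlgebra k (FreeSemigroup (A × V)))
          = MonoidAlgebra.single (FreeSemigroup.of w₁) c * MonoidAlgebra.single w₂ 1 := by
        rw [MonoidAlgebra.single_mul_single, mul_one]
      have e' : (MonoidAlgebra.single (wmap k A V B V' f g (FreeSemigroup.of w₁ * w₂)) c :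
            MonoidAlgebra k (FreeSemigroup (B × V')))
          = MonoidAlgebra.single (wmap k A V B V' f g (FreeSemigroup.of w₁)) c
            * MonoidAlgebra.single (wmap k A V B V' f g w₂) 1 := by
        rw [map_mul, MonoidAlgebra.single_mul_single, mul_one]
      rw [e, e', RingCon.coe_mul, RingCon.coe_mul, hmul, h1, h2]

lemma F_coe (F : TBarTilde k A V → TBarTilde k B V')
    (hadd : ∀ x y, F (x + y) = F x + F y)
    (hmul : ∀ x y, F (x * y) = F x * F y)
    (hF : ∀ (a : A) (v : V) (c : k), F (mkGen k A V a v c) = mkGen k B V' (f a) (g v) c)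
    (x : MonoidAlgebra k (FreeSemigroup (A × V))) :
    F ((x : TBarTilde k A V))
      = ((Phi k A V B V' f g x : MonoidAlgebra k (FreeSemigroup (B × V'))) :
          TBarTilde k B V') := by
  have hzero : F 0 = 0 := by
    have h := hadd 0 0
    rw [add_zero] at h
    exact (left_eq_add.mp h)
  induction x using MonoidAlgebra.induction_linear with
  | zero =>
      have e0 : ((0 : MonoidAlgebra k (FreeSemigroup (A × V))) : TBarTilde k A V) = 0 := rfl
      have e1 : Phi k A V B V' f g 0 = 0 := MonoidAlgebra.mapDomain_zero _
      rw [e0, hzero, e1]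
      rfl
  | add x y hx hy =>
      have e0 : ((x + y : MonoidAlgebra k (FreeSemigroup (A × V))) : TBarTilde k A V)
          = (x : TBarTilde k A V) + (y : TBarTilde k A V) := rfl
      have e1 : Phi k A V B V' f g (x + y) = Phi k A V B V' f g x + Phi k A V B V' f g y :=
        MonoidAlgebra.mapDomain_add _ _ _
      rw [e0, hadd, hx, hy, e1, RingCon.coe_add]
  | single w c =>
      rw [F_single f g F hmul hF w c, Phi_single]

theorem induced_injective'
    (hf : Function.Injective f) (hg : Function.Injective g)
    (F : TBarTilde k A V → TBarTilde k B V')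
    (hadd : ∀ x y, F (x + y) = F x + F y)
    (hmul : ∀ x y, F (x * y) = F x * F y)
    (hF : ∀ (a : A) (v : V) (c : k), F (mkGen k A V a v c) = mkGen k B V' (f a) (g v) c) :
    Function.Injective F := by
  intro X Y h
  obtain ⟨x, rfl⟩ := Quot.exists_rep X
  obtain ⟨y, rfl⟩ := Quot.exists_rep Y
  have hx : Quot.mk _ x = ((x : MonoidAlgebra k (FreeSemigroup (A × V))) : TBarTilde k A V) :=
    rfl
  have hy : Quot.mk _ y = ((y : MonoidAlgebra k (FreeSemigroup (A × V))) : TBarTilde k A V) :=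
    rfl
  rw [hx, hy] at h ⊢
  rw [F_coe f g F hadd hmul hF, F_coe f g F hadd hmul hF] at h
  have hcon : con k B V' (Phi k A V B V' f g x) (Phi k A V B V' f g y) :=
    (RingCon.eq _).mp h
  have hnf : NF k B V' (Phi k A V B V' f g x) = NF k B V' (Phi k A V B V' f g y) :=
    con_le_nfCon k B V' hcon
  rw [← NF_Psi, ← NF_Psi] at hnf
  have hnfA : NF k A V x = NF k A V y := Psi_injective k A V B V' f g hf hg hnf
  exact NF_faithful k A V hnfA

end Functorial



/-- If `g : V ↪ V'` is an injective linear map and `f : A ↪ B` an injective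
homomorphism of (not necessarily unital) `k`-algebras, then the induced algebra
homomorphism `T̄̃(A ⊕ V) → T̄̃(B ⊕ V')` — i.e. the additive and multiplicative map sending
the class of `c · (a, v)` to the class of `c · (f a, g v)` — is injective. -/
theorem induced_injective
    {k : Type*} [Field k]
    {A B : Type*} [NonUnitalRing A] [Module k A] [SMulCommClass k A A] [IsScalarTower k A A]
    [NonUnitalRing B] [Module k B] [SMulCommClass k B B] [IsScalarTower k B B]
    {V V' : Type*} [AddCommGroup V] [Module k V] [AddCommGroup V'] [Module k V']
    (f : A →ₙₐ[k] B) (hf : Function.Injective f)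
    (g : V →ₗ[k] V') (hg : Function.Injective g)
    (F : TBarTilde k A V → TBarTilde k B V')
    (hadd : ∀ x y, F (x + y) = F x + F y)
    (hmul : ∀ x y, F (x * y) = F x * F y)
    (hF : ∀ (a : A) (v : V) (c : k), F (mkGen k A V a v c) = mkGen k B V' (f a) (g v) c) :
    Function.Injective F := by
  exact induced_injective' f g hf hg F hadd hmul hF

end Stmt6
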